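/- The function h : [0,1] → ℝ defined piecewise by h(y) = 1 − (1 + y/2)·e^{−2y} − (1/2)·y·(1 − y) for 0 ≤ y ≤ 1/2, and h(y) = 1 − e^{−2y}·(1 + (1/2 + e/4)·y) for 1/2 ≤ y ≤ 1, is well defined (the two formulas agree at y = 1/2, both equal to 1 − (5/4)e^{−1} − 1/8) and concave on the interval [0,1]. -/

import Mathlib

open Real Set

noncomputable def fL (y : ℝ) : ℝ := 1 - (1 + y/2) * exp (-2 * y) - (1/2) * y * (1 - y)
noncomputable def fR (y : ℝ) : ℝ := 1 - exp (-2 * y) * (1 + (1/2 + exp 1 / 4) * y)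
noncomputable def dL (y : ℝ) : ℝ := (3/2 + y) * exp (-2 * y) - 1/2 + y
noncomputable def dR (y : ℝ) : ℝ := exp (-2 * y) * (3/2 - exp 1 / 4 + (1 + exp 1 / 2) * y)

lemma hasDerivAt_E (y : ℝ) : HasDerivAt (fun x : ℝ => exp (-2 * x)) (-2 * exp (-2 * y)) y := by
  have h := ((hasDerivAt_id y).const_mul (-2 : ℝ)).exp
  simp only [id_eq] at h
  convert h using 1
  ring

lemma hasDerivAt_fL (y : ℝ) : HasDerivAt fL (dL y) y := by
  have h1 : HasDerivAt (fun x : ℝ => (1 + x/2) * exp (-2 * x))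
      ((1/2) * exp (-2 * y) + (1 + y/2) * (-2 * exp (-2 * y))) y := by
    have ha : HasDerivAt (fun x : ℝ => 1 + x/2) (1/2) y := by
      simpa using ((hasDerivAt_id y).div_const 2).const_add (1 : ℝ)
    exact ha.mul (hasDerivAt_E y)
  have h2 : HasDerivAt (fun x : ℝ => (1/2) * x * (1 - x))
      ((1/2) * (1 - y) + (1/2) * y * (-1)) y := by
    have ha : HasDerivAt (fun x : ℝ => (1/2) * x) (1/2) y := by
      simpa using (hasDerivAt_id y).const_mul (1/2 : ℝ)
    have hb : HasDerivAt (fun x : ℝ => 1 - x) (-1) y := by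
      simpa using (hasDerivAt_id y).const_sub (1 : ℝ)
    exact ha.mul hb
  have := ((hasDerivAt_const y (1 : ℝ)).sub h1).sub h2
  refine this.congr_deriv ?_
  unfold dL; ring

lemma hasDerivAt_fR (y : ℝ) : HasDerivAt fR (dR y) y := by
  have ha : HasDerivAt (fun x : ℝ => 1 + (1/2 + exp 1 / 4) * x) (1/2 + exp 1 / 4) y := by
    simpa using ((hasDerivAt_id y).const_mul (1/2 + exp 1 / 4)).const_add (1 : ℝ)
  have h1 : HasDerivAt (fun x : ℝ => exp (-2 * x) * (1 + (1/2 + exp 1 / 4) * x))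
      (-2 * exp (-2 * y) * (1 + (1/2 + exp 1 / 4) * y) + exp (-2 * y) * (1/2 + exp 1 / 4)) y :=
    (hasDerivAt_E y).mul ha
  have := (hasDerivAt_const y (1 : ℝ)).sub h1
  refine this.congr_deriv ?_
  unfold dR; ring

lemma hasDerivAt_dL (y : ℝ) : HasDerivAt dL ((-2 - 2*y) * exp (-2 * y) + 1) y := by
  have ha : HasDerivAt (fun x : ℝ => 3/2 + x) 1 y := by
    simpa using (hasDerivAt_id y).const_add (3/2 : ℝ)
  have h1 := ha.mul (hasDerivAt_E y)
  have := (h1.sub_const (1/2 : ℝ)).add (hasDerivAt_id y)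
  refine this.congr_deriv ?_
  ring

lemma hasDerivAt_dR (y : ℝ) :
    HasDerivAt dR (exp (-2 * y) * ((exp 1 - 2) - (2 + exp 1) * y)) y := by
  have ha : HasDerivAt (fun x : ℝ => 3/2 - exp 1 / 4 + (1 + exp 1 / 2) * x) (1 + exp 1 / 2) y := by
    simpa using ((hasDerivAt_id y).const_mul (1 + exp 1 / 2)).const_add (3/2 - exp 1 / 4)
  have := (hasDerivAt_E y).mul ha
  refine this.congr_deriv ?_
  ring

lemma exp_two_le (y : ℝ) (hy : y ∈ Icc (0:ℝ) (1/2)) : exp (2 * y) ≤ 2 + 2 * y := by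
  obtain ⟨h0, h1⟩ := hy
  have hc := convexOn_exp.2 (mem_univ (0:ℝ)) (mem_univ (1:ℝ))
      (show (0:ℝ) ≤ 1 - 2*y by linarith) (show (0:ℝ) ≤ 2*y by linarith) (by ring)
  simp only [smul_eq_mul, mul_zero, mul_one, zero_add, exp_zero] at hc
  have he : exp 1 < 2.7182818286 := exp_one_lt_d9
  nlinarith

lemma dL_anti : AntitoneOn dL (Icc (0:ℝ) (1/2)) := by
  have hcont : Continuous dL := by
    unfold dL; continuity
  apply antitoneOn_of_deriv_nonpos (convex_Icc _ _) hcont.continuousOn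
  · intro x _
    exact (hasDerivAt_dL x).differentiableAt.differentiableWithinAt
  · intro x hx
    rw [interior_Icc] at hx
    rw [(hasDerivAt_dL x).deriv]
    have hle : exp (2 * x) ≤ 2 + 2 * x := exp_two_le x ⟨hx.1.le, hx.2.le⟩
    have hpos : (0:ℝ) < exp (-2 * x) := exp_pos _
    have hmul : exp (2 * x) * exp (-2 * x) = 1 := by
      rw [← exp_add]; norm_num
    nlinarith

lemma dR_anti : AntitoneOn dR (Icc (1/2:ℝ) 1) := by
  have hcont : Continuous dR := by
    unfold dR; continuity
  apply antitoneOn_of_deriv_nonpos (convex_Icc _ _) hcont.continuousOn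
  · intro x _
    exact (hasDerivAt_dR x).differentiableAt.differentiableWithinAt
  · intro x hx
    rw [interior_Icc] at hx
    rw [(hasDerivAt_dR x).deriv]
    have hpos : (0:ℝ) < exp (-2 * x) := exp_pos _
    have he : exp 1 < 2.7182818286 := exp_one_lt_d9
    have h1 : (1/2:ℝ) < x := hx.1
    have hep : (0:ℝ) < exp 1 := exp_pos 1
    have hneg : (exp 1 - 2) - (2 + exp 1) * x < 0 := by nlinarith
    exact le_of_lt (mul_neg_of_pos_of_neg hpos hneg)

lemma dLR_half : dL (1/2) = dR (1/2) := by
  unfold dL dR; ring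

lemma fLR_half : fL (1/2) = fR (1/2) := by
  unfold fL fR
  have h1 : exp (-1:ℝ) * exp 1 = 1 := by rw [← exp_add]; norm_num
  have h2 : exp (-2 * (1/2:ℝ)) = exp (-1) := by norm_num
  rw [h2]
  linear_combination (1/8:ℝ) * h1

noncomputable def hFun (y : ℝ) : ℝ := if y ≤ 1/2 then fL y else fR y

lemma hFun_hasDerivAt (y : ℝ) : HasDerivAt hFun (if y ≤ 1/2 then dL y else dR y) y := by
  rcases lt_trichotomy y (1/2 : ℝ) with hy | hy | hy
  · rw [if_pos hy.le]
    refine (hasDerivAt_fL y).congr_of_eventuallyEq ?_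
    filter_upwards [Iio_mem_nhds hy] with x hx
    exact if_pos (le_of_lt hx)
  · subst hy
    rw [if_pos le_rfl]
    have hLhs : HasDerivWithinAt hFun (dL (1/2)) (Iic (1/2 : ℝ)) (1/2) := by
      refine ((hasDerivAt_fL (1/2)).hasDerivWithinAt).congr ?_ ?_
      · intro x hx; exact if_pos hx
      · exact if_pos le_rfl
    have hRhs : HasDerivWithinAt hFun (dL (1/2)) (Ici (1/2 : ℝ)) (1/2) := by
      rw [dLR_half]
      refine ((hasDerivAt_fR (1/2)).hasDerivWithinAt).congr ?_ ?_
      · intro x hx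
        rcases eq_or_lt_of_le (mem_Ici.mp hx) with h | h
        · rw [hFun, ← h, if_pos le_rfl, fLR_half]
        · rw [hFun, if_neg (not_le.mpr h)]
      · rw [hFun, if_pos le_rfl, fLR_half]
    have := hLhs.union hRhs
    rwa [Iic_union_Ici, hasDerivWithinAt_univ] at this
  · rw [if_neg (not_le.mpr hy)]
    refine (hasDerivAt_fR y).congr_of_eventuallyEq ?_
    filter_upwards [Ioi_mem_nhds hy] with x hx
    exact if_neg (not_le.mpr hx)

lemma hFun_concave : ConcaveOn ℝ (Icc (0:ℝ) 1) hFun := by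
  have hcont : Continuous hFun := by
    unfold hFun
    refine Continuous.if_le ?_ ?_ continuous_id continuous_const ?_
    · unfold fL; continuity
    · unfold fR; continuity
    · intro x hx; rw [hx]; exact fLR_half
  apply AntitoneOn.concaveOn_of_deriv (convex_Icc _ _) hcont.continuousOn
  · intro x _
    exact (hFun_hasDerivAt x).differentiableAt.differentiableWithinAt
  · rw [interior_Icc]
    intro x hx y hy hxy
    rw [(hFun_hasDerivAt x).deriv, (hFun_hasDerivAt y).deriv]
    by_cases hx2 : x ≤ 1/2
    · by_cases hy2 : y ≤ 1/2
      · rw [if_pos hx2, if_pos hy2]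
        exact dL_anti ⟨hx.1.le, hx2⟩ ⟨hy.1.le, hy2⟩ hxy
      · rw [if_pos hx2, if_neg hy2]
        push_neg at hy2
        calc dR y ≤ dR (1/2) := dR_anti ⟨le_rfl, by linarith [hy.2]⟩ ⟨hy2.le, hy.2.le⟩ hy2.le
          _ = dL (1/2) := dLR_half.symm
          _ ≤ dL x := dL_anti ⟨hx.1.le, hx2⟩ ⟨by norm_num, le_rfl⟩ hx2
    · have hy2 : ¬ y ≤ 1/2 := fun h => hx2 (hxy.trans h)
      rw [if_neg hx2, if_neg hy2]
      push_neg at hx2 hy2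
      exact dR_anti ⟨hx2.le, hx.2.le⟩ ⟨hy2.le, hy.2.le⟩ hxy

/-- Appendix B.4: the piecewise matching-probability bound (Equation (10)) is
well defined and concave on [0,1]. -/
theorem concave_socs_matching_random_order_bound :
    (1 - (1 + (1/2 : ℝ)/2) * exp (-2 * (1/2)) - (1/2) * (1/2) * (1 - 1/2)
        = 1 - exp (-2 * (1/2)) * (1 + (1/2 + exp 1 / 4) * (1/2)))
    ∧ (1 - (1 + (1/2 : ℝ)/2) * exp (-2 * (1/2)) - (1/2) * (1/2) * (1 - 1/2)
        = 1 - (5/4) * exp (-1) - 1/8)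
    ∧ ConcaveOn ℝ (Set.Icc (0 : ℝ) 1)
        (fun y : ℝ => if y ≤ 1/2
          then 1 - (1 + y/2) * exp (-2 * y) - (1/2) * y * (1 - y)
          else 1 - exp (-2 * y) * (1 + (1/2 + exp 1 / 4) * y)) := by
  have hexp : exp (-2 * (1/2:ℝ)) = exp (-1) := by norm_num
  have h1 : exp (-1) * exp 1 = 1 := by rw [← exp_add]; norm_num
  refine ⟨?_, ?_, hFun_concave⟩
  · have := fLR_half
    unfold fL fR at this
    convert this using 2
  · rw [hexp]; ring
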